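/- Let $L \ge 1$ an integer, $\delta \in (0,1)$, and for each $l \in \{1,\dots,L\}$ let $p_l \in (0,1)$, $m_l \ge 1$, $Q_l \ge 1$ be given with $q_{l-1} \ge \frac{1}{\log(1/(1-p_l))}\,\log\!\left(\frac{L\, m_l\, Q_l}{\delta}\right)$. Then $\prod_{l=1}^{L}\left(1 - (1-p_l)^{q_{l-1}}\right)^{m_l Q_l} \ge 1 - \delta$. -/

import Mathlib

/-- Probability estimate for WLT existence in depth-L ER networks:
    the per-layer width conditions imply the product bound ≥ 1 - δ.
    Here `q l`, `p l`, `m l`, `Q l` stand for q_{l-1}, p_l, m_l, Q_l with l = 1,…,L. -/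
theorem stmt_7 (L : ℕ) (hL : 1 ≤ L) (δ : ℝ) (hδ : δ ∈ Set.Ioo (0:ℝ) 1)
    (p m Q q : ℕ → ℝ)
    (hp : ∀ l ∈ Finset.Icc 1 L, p l ∈ Set.Ioo (0:ℝ) 1)
    (hm : ∀ l ∈ Finset.Icc 1 L, 1 ≤ m l)
    (hQ : ∀ l ∈ Finset.Icc 1 L, 1 ≤ Q l)
    (hq : ∀ l ∈ Finset.Icc 1 L,
      q (l - 1) ≥ (1 / Real.log (1 / (1 - p l))) * Real.log (L * m l * Q l / δ)) :
    ∏ l ∈ Finset.Icc 1 L, (1 - (1 - p l) ^ q (l - 1)) ^ (m l * Q l) ≥ 1 - δ := by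
  obtain ⟨hδ0, hδ1⟩ := hδ
  have hLpos : (0:ℝ) < L := by positivity
  have hL1 : (1:ℝ) ≤ L := by exact_mod_cast hL
  have hδL0 : 0 ≤ 1 - δ / L := by
    have : δ / L ≤ δ := by
      rw [div_le_iff₀ hLpos]; nlinarith
    linarith
  -- each factor is at least 1 - δ/L
  have key : ∀ l ∈ Finset.Icc 1 L,
      1 - δ / L ≤ (1 - (1 - p l) ^ q (l - 1)) ^ (m l * Q l) := by
    intro l hl
    obtain ⟨hp0, hp1⟩ := hp l hl
    have hm1 := hm l hl
    have hQ1 := hQ l hl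
    have hq1 := hq l hl
    set c : ℝ := 1 - p l with hc
    have hc0 : 0 < c := by linarith
    have hc1 : c < 1 := by linarith
    have hlogc : 0 < Real.log (1 / c) := by
      rw [Real.log_div one_ne_zero hc0.ne', Real.log_one]
      have := Real.log_neg hc0 hc1
      linarith
    have hmQ1 : (1:ℝ) ≤ m l * Q l := by nlinarith
    have hmQ0 : (0:ℝ) < m l * Q l := by linarith
    have hLmQ0 : (0:ℝ) < L * m l * Q l := by nlinarith
    -- q * log(1/c) ≥ log(LmQ/δ)
    have h1 : Real.log (L * m l * Q l / δ) ≤ q (l - 1) * Real.log (1 / c) := by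
      rw [ge_iff_le, div_mul_eq_mul_div, div_le_iff₀ hlogc, one_mul] at hq1
      exact hq1
    -- c ^ q ≤ δ / (L m Q)
    have hx : c ^ q (l - 1) ≤ δ / (L * m l * Q l) := by
      have hxpos : 0 < c ^ q (l - 1) := Real.rpow_pos_of_pos hc0 _
      have hypos : 0 < δ / (L * m l * Q l) := by positivity
      rw [← Real.log_le_log_iff hxpos hypos, Real.log_rpow hc0,
        Real.log_div hδ0.ne' hLmQ0.ne']
      rw [Real.log_div one_ne_zero hc0.ne', Real.log_one] at h1
      rw [Real.log_div hLmQ0.ne' hδ0.ne'] at h1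
      nlinarith
    have hx0 : 0 < c ^ q (l - 1) := Real.rpow_pos_of_pos hc0 _
    have hmQx : m l * Q l * c ^ q (l - 1) ≤ δ / L := by
      have := mul_le_mul_of_nonneg_left hx hmQ0.le
      calc m l * Q l * c ^ q (l - 1) ≤ m l * Q l * (δ / (L * m l * Q l)) := this
        _ = δ / L := by field_simp
    have hbern : 1 + (m l * Q l) * (-(c ^ q (l - 1))) ≤
        (1 + -(c ^ q (l - 1))) ^ (m l * Q l) := by
      apply one_add_mul_self_le_rpow_one_add _ hmQ1
      have : c ^ q (l - 1) ≤ 1 := by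
        calc c ^ q (l - 1) ≤ δ / (L * m l * Q l) := hx
          _ ≤ 1 := by
            rw [div_le_one hLmQ0]; nlinarith
      linarith
    have : 1 - (m l * Q l) * c ^ q (l - 1) ≤
        (1 - c ^ q (l - 1)) ^ (m l * Q l) := by
      simpa [sub_eq_add_neg, mul_neg] using hbern
    linarith
  -- the product is ≥ (1 - δ/L)^L ≥ 1 - δ
  calc (1:ℝ) - δ ≤ (1 - δ / L) ^ L := by
        have := one_add_mul_le_pow (a := -(δ / L)) (by linarith) L
        have h2 : 1 + (L : ℝ) * -(δ / L) = 1 - δ := by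
          field_simp
          ring
        rw [h2] at this
        simpa [sub_eq_add_neg] using this
    _ = ∏ l ∈ Finset.Icc 1 L, (1 - δ / L) := by
        rw [Finset.prod_const, Nat.card_Icc]; norm_num
    _ ≤ ∏ l ∈ Finset.Icc 1 L, (1 - (1 - p l) ^ q (l - 1)) ^ (m l * Q l) :=
        Finset.prod_le_prod (fun l _ => hδL0) key
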